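/- Let −1/2 ≤ s ≤ 0 and −s − 3/2 < t < 0. There exists a constant C_{s,t} > 0 such that for all complex sequences a ∈ ℓ^{s,∞} and b ∈ ℓ^{t+2,2}, the convolution a*b, defined by (a*b)_n = ∑_{m∈ℤ} a_{n−m} b_m, is well defined (each series converges absolutely) and satisfies ‖a*b‖_{s,∞} ≤ C_{s,t} ‖a‖_{s,∞} ‖b‖_{t+2,2}. -/

import Mathlib

lemma aux_summable_rpow {r : ℝ} (hr : r < -1) :
    Summable fun m : ℤ => (1 + |(m : ℝ)|) ^ r := by
  have hnat : Summable fun n : ℕ => ((n : ℝ) + 1) ^ r := by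
    have h := (Real.summable_nat_rpow (p := r)).mpr hr
    have := (summable_nat_add_iff (f := fun n : ℕ => (n : ℝ) ^ r) 1).mpr h
    exact this.congr (by intro n; push_cast; ring_nf)
  apply Summable.of_nat_of_neg
  · refine hnat.congr fun n => ?_
    push_cast
    rw [abs_of_nonneg (n.cast_nonneg : (0:ℝ) ≤ n), add_comm]
  · refine hnat.congr fun n => ?_
    push_cast
    rw [abs_neg, abs_of_nonneg (n.cast_nonneg : (0:ℝ) ≤ n), add_comm]

lemma aux_CS (x y : ℤ → ℝ) (hx : ∀ m, 0 ≤ x m) (hy : ∀ m, 0 ≤ y m)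
    (hx2 : Summable fun m => x m ^ 2) (hy2 : Summable fun m => y m ^ 2) :
    Summable (fun m => x m * y m) ∧
      ∑' m, x m * y m ≤ Real.sqrt (∑' m, x m ^ 2) * Real.sqrt (∑' m, y m ^ 2) := by
  have hsum : Summable fun m => x m * y m := by
    apply Summable.of_nonneg_of_le (fun m => mul_nonneg (hx m) (hy m))
      (fun m => ?_) ((hx2.add hy2).mul_left (1/2 : ℝ))
    nlinarith [sq_nonneg (x m - y m)]
  refine ⟨hsum, hsum.tsum_le_of_sum_le fun F => ?_⟩
  calc ∑ m ∈ F, x m * y m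
      ≤ Real.sqrt (∑ m ∈ F, x m ^ 2) * Real.sqrt (∑ m ∈ F, y m ^ 2) :=
        Real.sum_mul_le_sqrt_mul_sqrt F x y
    _ ≤ Real.sqrt (∑' m, x m ^ 2) * Real.sqrt (∑' m, y m ^ 2) := by
        apply mul_le_mul
        · exact Real.sqrt_le_sqrt (Summable.sum_le_tsum F (fun m _ => sq_nonneg _) hx2)
        · exact Real.sqrt_le_sqrt (Summable.sum_le_tsum F (fun m _ => sq_nonneg _) hy2)
        · positivity
        · positivity

/-- Convolution estimate: for `−1/2 ≤ s ≤ 0` and `−s−3/2 < t < 0` there is `C_{s,t} > 0`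
such that for all `a ∈ ℓ^{s,∞}` and `b ∈ ℓ^{t+2,2}`, the convolution `a*b` is well defined
(each series converges absolutely) and `‖a*b‖_{s,∞} ≤ C_{s,t} ‖a‖_{s,∞} ‖b‖_{t+2,2}`. -/
theorem stmt_7 (s t : ℝ) (hs₁ : -(1 / 2) ≤ s) (hs₂ : s ≤ 0)
    (ht₁ : -s - 3 / 2 < t) (ht₂ : t < 0) :
    ∃ C : ℝ, 0 < C ∧ ∀ a b : ℤ → ℂ,
      BddAbove (Set.range fun k : ℤ => (1 + |k| : ℝ) ^ s * ‖a k‖) →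
      Summable (fun k : ℤ => ((1 + |k| : ℝ) ^ (t + 2) * ‖b k‖) ^ 2) →
      (∀ n : ℤ, Summable fun m : ℤ => ‖a (n - m) * b m‖) ∧
      BddAbove (Set.range fun n : ℤ =>
        (1 + |n| : ℝ) ^ s * ‖∑' m : ℤ, a (n - m) * b m‖) ∧
      (⨆ n : ℤ, (1 + |n| : ℝ) ^ s * ‖∑' m : ℤ, a (n - m) * b m‖)
        ≤ C * (⨆ k : ℤ, (1 + |k| : ℝ) ^ s * ‖a k‖)
            * (∑' k : ℤ, ((1 + |k| : ℝ) ^ (t + 2) * ‖b k‖) ^ 2) ^ ((1 : ℝ) / 2) := by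
  set σ : ℝ := -s - (t + 2) with hσ
  have hσlt : σ * 2 < -1 := by rw [hσ]; linarith
  have hKsum : Summable fun m : ℤ => ((1 + |(m : ℝ)|) ^ σ) ^ 2 := by
    refine (aux_summable_rpow hσlt).congr fun m => ?_
    rw [Real.rpow_mul (by positivity), show (2:ℝ) = ((2:ℕ):ℝ) by norm_num, Real.rpow_natCast]
  set K : ℝ := ∑' m : ℤ, ((1 + |(m : ℝ)|) ^ σ) ^ 2 with hKdef
  have hK1 : (1 : ℝ) ≤ K := by
    have := hKsum.le_tsum 0 (fun j _ => sq_nonneg _)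
    simpa [Real.one_rpow] using this
  refine ⟨Real.sqrt K, Real.sqrt_pos.mpr (by linarith), fun a b hA hb => ?_⟩
  simp only [Int.cast_abs] at hA hb ⊢
  set A : ℝ := ⨆ k : ℤ, (1 + |(k : ℝ)|) ^ s * ‖a k‖ with hAdef
  have hAle : ∀ k : ℤ, (1 + |(k : ℝ)|) ^ s * ‖a k‖ ≤ A := fun k => le_ciSup hA k
  have hA0 : 0 ≤ A :=
    le_trans (mul_nonneg (by positivity) (norm_nonneg _)) (hAle 0)
  have ha : ∀ k : ℤ, ‖a k‖ ≤ A * (1 + |(k : ℝ)|) ^ (-s) := by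
    intro k
    have h1 : (0:ℝ) < 1 + |(k : ℝ)| := by positivity
    have h2 : (0:ℝ) < (1 + |(k : ℝ)|) ^ s := Real.rpow_pos_of_pos h1 s
    rw [Real.rpow_neg h1.le, ← div_eq_mul_inv, le_div_iff₀ h2, mul_comm]
    exact hAle k
  obtain ⟨hxy, hT⟩ := aux_CS (fun m => (1 + |(m : ℝ)|) ^ σ)
    (fun m => (1 + |(m : ℝ)|) ^ (t + 2) * ‖b m‖)
    (fun m => by positivity) (fun m => mul_nonneg (by positivity) (norm_nonneg _))
    hKsum hb
  have hpt : ∀ n m : ℤ, ‖a (n - m) * b m‖ ≤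
      A * (1 + |(n : ℝ)|) ^ (-s) *
        ((1 + |(m : ℝ)|) ^ σ * ((1 + |(m : ℝ)|) ^ (t + 2) * ‖b m‖)) := by
    intro n m
    have hn1 : (0:ℝ) < 1 + |(n : ℝ)| := by positivity
    have hm1 : (0:ℝ) < 1 + |(m : ℝ)| := by positivity
    have hle : (1 + |((n - m : ℤ) : ℝ)|) ≤ (1 + |(n : ℝ)|) * (1 + |(m : ℝ)|) := by
      push_cast
      have h2 : |(n : ℝ) - (m : ℝ)| ≤ |(n : ℝ)| + |(m : ℝ)| := abs_sub _ _
      nlinarith [abs_nonneg (n : ℝ), abs_nonneg (m : ℝ)]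
    have hrp : (1 + |((n - m : ℤ) : ℝ)|) ^ (-s) ≤
        (1 + |(n : ℝ)|) ^ (-s) * (1 + |(m : ℝ)|) ^ (-s) := by
      rw [← Real.mul_rpow hn1.le hm1.le]
      exact Real.rpow_le_rpow (by positivity) hle (by linarith)
    have hsplit : (1 + |(m : ℝ)|) ^ (-s) = (1 + |(m : ℝ)|) ^ σ * (1 + |(m : ℝ)|) ^ (t + 2) := by
      rw [← Real.rpow_add hm1, hσ]; ring_nf
    rw [norm_mul]
    calc ‖a (n - m)‖ * ‖b m‖
        ≤ (A * (1 + |((n - m : ℤ) : ℝ)|) ^ (-s)) * ‖b m‖ :=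
          mul_le_mul_of_nonneg_right (ha (n - m)) (norm_nonneg _)
      _ ≤ (A * ((1 + |(n : ℝ)|) ^ (-s) * (1 + |(m : ℝ)|) ^ (-s))) * ‖b m‖ :=
          mul_le_mul_of_nonneg_right (mul_le_mul_of_nonneg_left hrp hA0) (norm_nonneg _)
      _ = A * (1 + |(n : ℝ)|) ^ (-s) *
            ((1 + |(m : ℝ)|) ^ σ * ((1 + |(m : ℝ)|) ^ (t + 2) * ‖b m‖)) := by
          rw [hsplit]; ring
  have hsumn : ∀ n : ℤ, Summable fun m : ℤ => ‖a (n - m) * b m‖ := by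
    intro n
    exact Summable.of_nonneg_of_le (fun m => norm_nonneg _) (fun m => hpt n m)
      (hxy.mul_left (A * (1 + |(n : ℝ)|) ^ (-s)))
  have hbound : ∀ n : ℤ, (1 + |(n : ℝ)|) ^ s * ‖∑' m : ℤ, a (n - m) * b m‖ ≤
      Real.sqrt K * A *
        (∑' k : ℤ, ((1 + |(k : ℝ)|) ^ (t + 2) * ‖b k‖) ^ 2) ^ ((1 : ℝ) / 2) := by
    intro n
    have hn1 : (0:ℝ) < 1 + |(n : ℝ)| := by positivity
    have hne : ((1 + |(n : ℝ)|) ^ s) ≠ 0 := (Real.rpow_pos_of_pos hn1 s).ne'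
    have h1 : ‖∑' m : ℤ, a (n - m) * b m‖ ≤
        ∑' m : ℤ, ‖a (n - m) * b m‖ := by
      simpa using
        norm_tsum_le_tsum_norm (f := fun m : ℤ => a (n - m) * b m)
          (by simpa using hsumn n)
    have h2 : ∑' m : ℤ, ‖a (n - m) * b m‖ ≤
        A * (1 + |(n : ℝ)|) ^ (-s) *
          ∑' m : ℤ, (1 + |(m : ℝ)|) ^ σ * ((1 + |(m : ℝ)|) ^ (t + 2) * ‖b m‖) := by
      rw [← tsum_mul_left]
      exact Summable.tsum_le_tsum (fun m => hpt n m) (hsumn n)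
        (hxy.mul_left (A * (1 + |(n : ℝ)|) ^ (-s)))
    calc (1 + |(n : ℝ)|) ^ s * ‖∑' m : ℤ, a (n - m) * b m‖
        ≤ (1 + |(n : ℝ)|) ^ s * (A * (1 + |(n : ℝ)|) ^ (-s) *
            ∑' m : ℤ, (1 + |(m : ℝ)|) ^ σ * ((1 + |(m : ℝ)|) ^ (t + 2) * ‖b m‖)) :=
          mul_le_mul_of_nonneg_left (h1.trans h2) (by positivity)
      _ = A * ∑' m : ℤ, (1 + |(m : ℝ)|) ^ σ * ((1 + |(m : ℝ)|) ^ (t + 2) * ‖b m‖) := by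
          rw [Real.rpow_neg hn1.le]
          field_simp
      _ ≤ A * (Real.sqrt K *
            Real.sqrt (∑' k : ℤ, ((1 + |(k : ℝ)|) ^ (t + 2) * ‖b k‖) ^ 2)) :=
          mul_le_mul_of_nonneg_left hT hA0
      _ = Real.sqrt K * A *
            (∑' k : ℤ, ((1 + |(k : ℝ)|) ^ (t + 2) * ‖b k‖) ^ 2) ^ ((1 : ℝ) / 2) := by
          simp only [Real.sqrt_eq_rpow]; ring
  refine ⟨hsumn, ⟨Real.sqrt K * A *
    (∑' k : ℤ, ((1 + |(k : ℝ)|) ^ (t + 2) * ‖b k‖) ^ 2) ^ ((1 : ℝ) / 2), ?_⟩,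
    ciSup_le hbound⟩
  rintro x ⟨n, rfl⟩
  exact hbound n
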